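/- Let X be a medial quandle, k a commutative ring, and w an idempotent of the quandle ring k[X]. Then (u·v)·w = (u·w)·(v·w) and w·(u·v) = (w·u)·(w·v) for all u, v ∈ k[X]. -/

import Mathlib

/-- The quandle ring multiplication on `X →₀ k` determined by
`e_x · e_y = e_{op x y}` extended bilinearly. -/
noncomputable def qmul {X : Type*} {k : Type*} [CommRing k] (op : X → X → X)
    (f g : X →₀ k) : X →₀ k :=
  f.sum fun x a => g.sum fun y b => Finsupp.single (op x y) (a * b)

section aux

variable {X : Type*} {k : Type*} [CommRing k] (op : X → X → X)

lemma qmul_zero_left (g : X →₀ k) : qmul op 0 g = 0 := by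
  simp [qmul]

lemma qmul_zero_right (f : X →₀ k) : qmul op f 0 = 0 := by
  simp [qmul]

lemma qmul_add_left (f f' g : X →₀ k) :
    qmul op (f + f') g = qmul op f g + qmul op f' g := by
  unfold qmul
  apply Finsupp.sum_add_index' <;> intros <;>
    simp [add_mul, Finsupp.single_add, Finsupp.sum_add]

lemma qmul_add_right (f g g' : X →₀ k) :
    qmul op f (g + g') = qmul op f g + qmul op f g' := by
  unfold qmul
  rw [← Finsupp.sum_add]
  apply Finsupp.sum_congr
  intro x _
  apply Finsupp.sum_add_index' <;> intros <;>
    simp [mul_add, Finsupp.single_add]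

lemma qmul_single_single (x y : X) (a b : k) :
    qmul op (Finsupp.single x a) (Finsupp.single y b)
      = Finsupp.single (op x y) (a * b) := by
  unfold qmul
  rw [Finsupp.sum_single_index, Finsupp.sum_single_index]
  · simp
  · simp

lemma qmul_medial
    (hmedial : ∀ x y z w, op (op x y) (op z w) = op (op x z) (op y w)) :
    ∀ u v z t : X →₀ k,
      qmul op (qmul op u v) (qmul op z t) = qmul op (qmul op u z) (qmul op v t) := by
  have key : ∀ (x y p q : X) (a b c d : k),
      qmul op (qmul op (Finsupp.single x a) (Finsupp.single y b))
        (qmul op (Finsupp.single p c) (Finsupp.single q d))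
      = qmul op (qmul op (Finsupp.single x a) (Finsupp.single p c))
        (qmul op (Finsupp.single y b) (Finsupp.single q d)) := by
    intro x y p q a b c d
    simp only [qmul_single_single, hmedial]
    congr 1
    ring
  have L1 : ∀ (x y p : X) (a b c : k) (t : X →₀ k),
      qmul op (qmul op (Finsupp.single x a) (Finsupp.single y b))
        (qmul op (Finsupp.single p c) t)
      = qmul op (qmul op (Finsupp.single x a) (Finsupp.single p c))
        (qmul op (Finsupp.single y b) t) := by
    intro x y p a b c t
    induction t using Finsupp.induction with
    | zero => simp [qmul_zero_left, qmul_zero_right]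
    | single_add q d m _ _ ih => simp only [qmul_add_right, ih, key]
  have L2 : ∀ (x y : X) (a b : k) (z t : X →₀ k),
      qmul op (qmul op (Finsupp.single x a) (Finsupp.single y b)) (qmul op z t)
      = qmul op (qmul op (Finsupp.single x a) z) (qmul op (Finsupp.single y b) t) := by
    intro x y a b z t
    induction z using Finsupp.induction with
    | zero => simp [qmul_zero_left, qmul_zero_right]
    | single_add p c h _ _ ih => simp only [qmul_add_left, qmul_add_right, ih, L1]
  have L3 : ∀ (x : X) (a : k) (v z t : X →₀ k),
      qmul op (qmul op (Finsupp.single x a) v) (qmul op z t)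
      = qmul op (qmul op (Finsupp.single x a) z) (qmul op v t) := by
    intro x a v z t
    induction v using Finsupp.induction generalizing t with
    | zero => simp [qmul_zero_left, qmul_zero_right]
    | single_add y b g _ _ ih => simp only [qmul_add_left, qmul_add_right, ih, L2]
  intro u v z t
  induction u using Finsupp.induction generalizing v t with
  | zero => simp [qmul_zero_left]
  | single_add x a f _ _ ih => simp only [qmul_add_left, qmul_add_right, ih, L3]

end aux

/-- If `X` is a medial quandle, `k` a commutative ring and `w` an idempotent of
the quandle ring `k[X]`, then right and left multiplications by `w` are
distributive with respect to the ring multiplication. -/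
theorem mul_by_idempotent_distributive_of_medial {X : Type*} {k : Type*} [CommRing k]
    (op : X → X → X)
    (hidem : ∀ x, op x x = x)
    (hbij : ∀ y, Function.Bijective (fun x => op x y))
    (hdist : ∀ x y z, op (op x y) z = op (op x z) (op y z))
    (hmedial : ∀ x y z w, op (op x y) (op z w) = op (op x z) (op y w))
    (w : X →₀ k) (hw0 : w ≠ 0) (hw : qmul op w w = w) :
    ∀ u v : X →₀ k,
      qmul op (qmul op u v) w = qmul op (qmul op u w) (qmul op v w) ∧
      qmul op w (qmul op u v) = qmul op (qmul op w u) (qmul op w v) := by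
  intro u v
  constructor
  · conv_lhs => rw [← hw]
    exact qmul_medial op hmedial u v w w
  · conv_lhs => rw [← hw]
    exact qmul_medial op hmedial w w u v
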